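/- Let G be a finite group, α : G × G → ℂˣ a 2-cocycle, and N ⊴ G a normal subgroup; regard the twisted group algebra ℂ^αN as a subalgebra of ℂ^αG. Let M and M' be simple finite-dimensional left ℂ^αN-modules, and suppose ι_M (respectively ι_{M'}) is a central idempotent of ℂ^αN which acts as the identity on M (resp. M') and acts as zero on every simple ℂ^αN-module not isomorphic to M (resp. M'). Then ι_{M'} · ℂ^αG · ι_M ≠ 0 if and only if there exists g ∈ G with M' ≅ {}^{g}M as ℂ^αN-modules, where {}^{g}M is the module with the same underlying vector space as M and action a ⋆ m = (u_g⁻¹ a u_g)·m for a ∈ ℂ^αN. -/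

import Mathlib

/-- A 2-cocycle on `G` with values in `ℂˣ`. -/
def IsTwoCocycle {G : Type} [Group G] (α : G → G → ℂˣ) : Prop :=
  ∀ g h k : G, α g h * α (g * h) k = α h k * α g (h * k)

/-- A twisted group algebra `ℂ^αG`: a ℂ-algebra with a basis `u_g` of invertible
elements satisfying `u_g * u_h = α g h • u_{gh}`. -/
structure TwistedGroupAlgebra (G : Type) [Group G] (α : G → G → ℂˣ) where
  carrier : Type
  [ringStr : Ring carrier]
  [algStr : Algebra ℂ carrier]
  u : G → carrierˣ
  basis : Module.Basis G ℂ carrier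
  basis_eq : ∀ g : G, basis g = (u g : carrier)
  u_mul : ∀ g h : G, (u g : carrier) * (u h : carrier) = (α g h : ℂ) • (u (g * h) : carrier)

attribute [instance] TwistedGroupAlgebra.ringStr TwistedGroupAlgebra.algStr

namespace TwistedGroupAlgebra

variable {G : Type} [Group G] {α : G → G → ℂˣ}

/-- The subalgebra `ℂ^αN ⊆ ℂ^αG` spanned by the `u_n`, `n ∈ N`. -/
def sub (A : TwistedGroupAlgebra G α) (N : Subgroup G) : Subalgebra ℂ A.carrier :=
  Algebra.adjoin ℂ ((fun g : G => (A.u g : A.carrier)) '' (N : Set G))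

/-- The dimension over `ℂ` of a `ℂ^αN`-module. -/
noncomputable def dimC (A : TwistedGroupAlgebra G α) (N : Subgroup G) (M : Type)
    [AddCommGroup M] [Module (A.sub N) M] : ℕ :=
  Module.finrank ℂ (RestrictScalars ℂ (A.sub N) M)

/-- `TwistIso A N g M M'` says that `M'` is isomorphic to the twist `{}^{g}M` of the
`ℂ^αN`-module `M`, i.e. there is an additive bijection `e : M' → M` with
`e (a • m') = (u_g⁻¹ a u_g) • e m'` for all `a ∈ ℂ^αN`. -/
def TwistIso (A : TwistedGroupAlgebra G α) (N : Subgroup G) (g : G)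
    (M M' : Type) [AddCommGroup M] [Module (A.sub N) M]
    [AddCommGroup M'] [Module (A.sub N) M'] : Prop :=
  ∃ e : M' ≃+ M, ∀ (a : A.sub N) (m' : M')
    (h : (((A.u g)⁻¹ : A.carrierˣ) : A.carrier) * (a : A.carrier) * (A.u g : A.carrier) ∈
      A.sub N),
    e (a • m') =
      (⟨(((A.u g)⁻¹ : A.carrierˣ) : A.carrier) * (a : A.carrier) * (A.u g : A.carrier), h⟩ :
        A.sub N) • e m'

/-- The action of `G/N` on isomorphism classes of simple `ℂ^αN`-modules is transitive. -/
def TransAction (A : TwistedGroupAlgebra G α) (N : Subgroup G) : Prop :=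
  ∀ (M : Type) [AddCommGroup M] [Module (A.sub N) M]
    (M' : Type) [AddCommGroup M'] [Module (A.sub N) M'],
    IsSimpleModule (A.sub N) M → IsSimpleModule (A.sub N) M' →
    ∃ g : G, TwistIso A N g M M'

/-- The action of `G/N` on isomorphism classes of simple `ℂ^αN`-modules is free. -/
def FreeAction (A : TwistedGroupAlgebra G α) (N : Subgroup G) : Prop :=
  ∀ (M : Type) [AddCommGroup M] [Module (A.sub N) M], IsSimpleModule (A.sub N) M →
    ∀ g : G, TwistIso A N g M M → g ∈ N

/-- The restriction of the cohomology class of `α` to the subgroup `N` is trivial. -/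
def RestTrivial (α : G → G → ℂˣ) (N : Subgroup G) : Prop :=
  ∃ β : N → ℂˣ, ∀ n n' : N, α n n' = β n * β n' * (β (n * n'))⁻¹

end TwistedGroupAlgebra

namespace TwistedGroupAlgebra

variable {G : Type} [Group G] {α : G → G → ℂˣ}

lemma u_one_eq (A : TwistedGroupAlgebra G α) :
    (A.u 1 : A.carrier) = (α 1 1 : ℂ) • 1 := by
  have h := A.u_mul 1 1
  rw [mul_one] at h
  have h2 := congrArg (fun z => z * (((A.u 1)⁻¹ : A.carrierˣ) : A.carrier)) h
  simpa [mul_assoc, smul_mul_assoc] using h2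

lemma u_mem (A : TwistedGroupAlgebra G α) (N : Subgroup G) {n : G} (hn : n ∈ N) :
    (A.u n : A.carrier) ∈ A.sub N :=
  Algebra.subset_adjoin ⟨n, hn, rfl⟩

lemma u_inv_coe (A : TwistedGroupAlgebra G α) (g : G) :
    (((A.u g)⁻¹ : A.carrierˣ) : A.carrier)
      = ((α g g⁻¹ : ℂ) * (α 1 1 : ℂ))⁻¹ • (A.u g⁻¹ : A.carrier) := by
  apply Units.inv_eq_of_mul_eq_one_right
  have h1 : (α g g⁻¹ : ℂ) ≠ 0 := Units.ne_zero _
  have h2 : (α 1 1 : ℂ) ≠ 0 := Units.ne_zero _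
  rw [mul_smul_comm, A.u_mul, mul_inv_cancel, A.u_one_eq, smul_smul, smul_smul,
    mul_assoc, inv_mul_cancel₀ (mul_ne_zero h1 h2), one_smul]

lemma conj_mem (A : TwistedGroupAlgebra G α) (N : Subgroup G) [hN : N.Normal] (g : G)
    {x : A.carrier} (hx : x ∈ A.sub N) :
    (((A.u g)⁻¹ : A.carrierˣ) : A.carrier) * x * (A.u g : A.carrier) ∈ A.sub N := by
  induction hx using Algebra.adjoin_induction with
  | mem y hy =>
      obtain ⟨n, hn, rfl⟩ := hy
      have hmem : g⁻¹ * (n * g) ∈ N := by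
        have := hN.conj_mem n hn g⁻¹
        rwa [inv_inv, mul_assoc] at this
      rw [mul_assoc, A.u_mul, mul_smul_comm, A.u_inv_coe, smul_mul_assoc, A.u_mul]
      exact Subalgebra.smul_mem _ (Subalgebra.smul_mem _ (Subalgebra.smul_mem _
        (A.u_mem N hmem) _) _) _
  | algebraMap r =>
      rw [← Algebra.commutes r, mul_assoc, Units.inv_mul, mul_one]
      exact Subalgebra.algebraMap_mem _ r
  | add x y hx hy ihx ihy =>
      rw [mul_add, add_mul]; exact add_mem ihx ihy
  | mul x y hx hy ihx ihy =>
      have key : (((A.u g)⁻¹ : A.carrierˣ) : A.carrier) * (x * y) * (A.u g : A.carrier)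
          = ((((A.u g)⁻¹ : A.carrierˣ) : A.carrier) * x * (A.u g : A.carrier))
            * ((((A.u g)⁻¹ : A.carrierˣ) : A.carrier) * y * (A.u g : A.carrier)) := by
        simp [mul_assoc, Units.mul_inv_cancel_left]
      rw [key]; exact mul_mem ihx ihy

lemma conj_mem' (A : TwistedGroupAlgebra G α) (N : Subgroup G) [hN : N.Normal] (g : G)
    {x : A.carrier} (hx : x ∈ A.sub N) :
    (A.u g : A.carrier) * x * (((A.u g)⁻¹ : A.carrierˣ) : A.carrier) ∈ A.sub N := by
  induction hx using Algebra.adjoin_induction with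
  | mem y hy =>
      obtain ⟨n, hn, rfl⟩ := hy
      have hmem : g * n * g⁻¹ ∈ N := hN.conj_mem n hn g
      rw [A.u_mul, smul_mul_assoc, A.u_inv_coe, mul_smul_comm, A.u_mul]
      have hmem2 : g * n * g⁻¹ = (g*n) * g⁻¹ := rfl
      exact Subalgebra.smul_mem _ (Subalgebra.smul_mem _ (Subalgebra.smul_mem _
        (A.u_mem N hmem) _) _) _
  | algebraMap r =>
      rw [← Algebra.commutes r, mul_assoc, Units.mul_inv, mul_one]
      exact Subalgebra.algebraMap_mem _ r
  | add x y hx hy ihx ihy =>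
      rw [mul_add, add_mul]; exact add_mem ihx ihy
  | mul x y hx hy ihx ihy =>
      have key : (A.u g : A.carrier) * (x * y) * (((A.u g)⁻¹ : A.carrierˣ) : A.carrier)
          = ((A.u g : A.carrier) * x * (((A.u g)⁻¹ : A.carrierˣ) : A.carrier))
            * ((A.u g : A.carrier) * y * (((A.u g)⁻¹ : A.carrierˣ) : A.carrier)) := by
        simp [mul_assoc, Units.inv_mul_cancel_left]
      rw [key]; exact mul_mem ihx ihy


noncomputable def conjHom (A : TwistedGroupAlgebra G α) (N : Subgroup G) [N.Normal] (g : G) :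
    (A.sub N) →+* (A.sub N) where
  toFun a := ⟨(((A.u g)⁻¹ : A.carrierˣ) : A.carrier) * (a : A.carrier) * (A.u g : A.carrier),
    A.conj_mem N g a.2⟩
  map_one' := Subtype.ext (by simp)
  map_mul' a b := Subtype.ext (by
    show _ = _
    simp [mul_assoc, Units.mul_inv_cancel_left])
  map_zero' := Subtype.ext (by simp)
  map_add' a b := Subtype.ext (by
    show _ = _
    simp [mul_add, add_mul])

def Tw (A : TwistedGroupAlgebra G α) (N : Subgroup G) (g : G) (M : Type) : Type := M

instance (A : TwistedGroupAlgebra G α) (N : Subgroup G) (g : G) (M : Type) [AddCommGroup M] :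
    AddCommGroup (Tw A N g M) := inferInstanceAs (AddCommGroup M)

noncomputable instance (A : TwistedGroupAlgebra G α) (N : Subgroup G) [N.Normal] (g : G)
    (M : Type) [AddCommGroup M] [Module (A.sub N) M] :
    Module (A.sub N) (Tw A N g M) := Module.compHom M (A.conjHom N g)

lemma tw_smul (A : TwistedGroupAlgebra G α) (N : Subgroup G) [N.Normal] (g : G)
    (M : Type) [AddCommGroup M] [Module (A.sub N) M] (a : A.sub N) (m : Tw A N g M) :
    a • m = (A.conjHom N g a) • (show M from m) := rfl

lemma conjHom_surjective (A : TwistedGroupAlgebra G α) (N : Subgroup G) [N.Normal] (g : G) :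
    Function.Surjective (A.conjHom N g) := by
  intro b
  refine ⟨⟨(A.u g : A.carrier) * (b : A.carrier) * (((A.u g)⁻¹ : A.carrierˣ) : A.carrier),
    A.conj_mem' N g b.2⟩, Subtype.ext ?_⟩
  show (((A.u g)⁻¹ : A.carrierˣ) : A.carrier) * _ * (A.u g : A.carrier) = (b : A.carrier)
  simp [mul_assoc, Units.inv_mul_cancel_left, Units.mul_inv_cancel_left]

lemma tw_isSimple (A : TwistedGroupAlgebra G α) (N : Subgroup G) [N.Normal] (g : G)
    (M : Type) [AddCommGroup M] [Module (A.sub N) M]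
    (h : IsSimpleModule (A.sub N) M) : IsSimpleModule (A.sub N) (Tw A N g M) := by
  haveI := h
  haveI hnt : Nontrivial M := IsSimpleModule.nontrivial (A.sub N) M
  haveI : Nontrivial (Tw A N g M) := hnt
  haveI : Nontrivial (Submodule (A.sub N) (Tw A N g M)) := ⟨⊥, ⊤, bot_ne_top⟩
  refine { toIsSimpleOrder := ⟨fun p => ?_⟩ }
  let q : Submodule (A.sub N) M :=
    { carrier := {m : M | (show Tw A N g M from m) ∈ p}
      add_mem' := fun hx hy => p.add_mem hx hy
      zero_mem' := p.zero_mem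
      smul_mem' := by
        intro b m hm
        obtain ⟨a, ha⟩ := A.conjHom_surjective N g b
        have h2 : a • (show Tw A N g M from m) ∈ p := p.smul_mem a hm
        rw [tw_smul, ha] at h2
        exact h2 }
  rcases h.toIsSimpleOrder.2 q with hq | hq
  · left
    rw [eq_bot_iff]
    intro x hx
    have : (show M from x) ∈ q := hx
    rw [hq] at this
    exact (Submodule.mem_bot (R := A.sub N) (M := M)).mp this
  · right
    rw [eq_top_iff]
    intro x _
    have : (show M from x) ∈ q := by rw [hq]; trivial
    exact this


end TwistedGroupAlgebra

set_option maxHeartbeats 2000000 in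
set_option synthInstance.maxHeartbeats 400000 in
open TwistedGroupAlgebra in
/-- Let `α` be a 2-cocycle on a finite group `G`, `N ⊴ G`, and let
`M, M'` be simple finite-dimensional `ℂ^αN`-modules with corresponding central
idempotents `ιM, ιM' ∈ ℂ^αN` (acting as the identity on `M` resp. `M'`, and as zero on
every simple module not isomorphic to it).  Then `ιM' · ℂ^αG · ιM ≠ 0` iff there is
`g ∈ G` with `M' ≅ {}^{g}M`. -/
theorem stmt2 {G : Type} [Group G] [Fintype G] (α : G → G → ℂˣ) (hα : IsTwoCocycle α)
    (A : TwistedGroupAlgebra G α) (N : Subgroup G) [N.Normal]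
    (M M' : Type) [AddCommGroup M] [Module (A.sub N) M] [AddCommGroup M'] [Module (A.sub N) M']
    [Module ℂ M] [IsScalarTower ℂ (A.sub N) M] [FiniteDimensional ℂ M]
    [Module ℂ M'] [IsScalarTower ℂ (A.sub N) M'] [FiniteDimensional ℂ M']
    (hM : IsSimpleModule (A.sub N) M) (hM' : IsSimpleModule (A.sub N) M')
    (ιM ιM' : A.sub N)
    (hcen : ∀ b : A.sub N, ιM * b = b * ιM) (hcen' : ∀ b : A.sub N, ιM' * b = b * ιM')
    (hidem : ιM * ιM = ιM) (hidem' : ιM' * ιM' = ιM')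
    (hact : ∀ x : M, ιM • x = x) (hact' : ∀ x : M', ιM' • x = x)
    (hzero : ∀ (W : Type) [AddCommGroup W] [Module (A.sub N) W],
      IsSimpleModule (A.sub N) W → IsEmpty (W ≃ₗ[(A.sub N)] M) → ∀ w : W, ιM • w = 0)
    (hzero' : ∀ (W : Type) [AddCommGroup W] [Module (A.sub N) W],
      IsSimpleModule (A.sub N) W → IsEmpty (W ≃ₗ[(A.sub N)] M') → ∀ w : W, ιM' • w = 0) :
    (∃ x : A.carrier, (ιM' : A.carrier) * x * (ιM : A.carrier) ≠ 0) ↔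
      ∃ g : G, TwistIso A N g M M' := by
  constructor
  · rintro ⟨x, hx⟩
    have hterm : ∃ g : G, (ιM' : A.carrier) * (A.u g : A.carrier) * (ιM : A.carrier) ≠ 0 := by
      by_contra hc
      push_neg at hc
      apply hx
      have hrep := A.basis.sum_repr x
      have expand : (ιM' : A.carrier) * x * (ιM : A.carrier)
          = ∑ g : G, A.basis.repr x g •
              ((ιM' : A.carrier) * (A.u g : A.carrier) * (ιM : A.carrier)) := by
        conv_lhs => rw [← hrep]
        rw [Finset.mul_sum, Finset.sum_mul]
        refine Finset.sum_congr rfl fun g _ => ?_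
        rw [A.basis_eq, mul_smul_comm, smul_mul_assoc]
      rw [expand]
      exact Finset.sum_eq_zero fun g _ => by rw [hc g, smul_zero]
    obtain ⟨g, hg⟩ := hterm
    set c : A.sub N := ⟨(((A.u g)⁻¹ : A.carrierˣ) : A.carrier) * (ιM' : A.carrier) *
      (A.u g : A.carrier), A.conj_mem N g ιM'.2⟩ with hcdef
    have hcoe : ((c * ιM : A.sub N) : A.carrier)
        = (((A.u g)⁻¹ : A.carrierˣ) : A.carrier) *
            ((ιM' : A.carrier) * (A.u g : A.carrier) * (ιM : A.carrier)) := by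
      show (c : A.carrier) * (ιM : A.carrier) = _
      rw [hcdef]
      simp [mul_assoc]
    have he0 : c * ιM ≠ 0 := by
      intro h
      apply hg
      have h2 : (((A.u g)⁻¹ : A.carrierˣ) : A.carrier) *
          ((ιM' : A.carrier) * (A.u g : A.carrier) * (ιM : A.carrier)) = 0 := by
        rw [← hcoe, h]; simp
      calc (ιM' : A.carrier) * (A.u g : A.carrier) * (ιM : A.carrier)
          = (A.u g : A.carrier) * ((((A.u g)⁻¹ : A.carrierˣ) : A.carrier) *
              ((ιM' : A.carrier) * (A.u g : A.carrier) * (ιM : A.carrier))) :=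
            (Units.mul_inv_cancel_left _ _).symm
        _ = 0 := by rw [h2, mul_zero]
    have hid' : (ιM' : A.carrier) * (ιM' : A.carrier) = (ιM' : A.carrier) := by
      have := congrArg (Subtype.val) hidem'
      simpa using this
    have hcc : c * c = c := by
      apply Subtype.ext
      show (c : A.carrier) * (c : A.carrier) = (c : A.carrier)
      rw [hcdef]
      simp only [mul_assoc, Units.mul_inv_cancel_left]
      rw [← mul_assoc (ιM' : A.carrier) (ιM' : A.carrier), hid']
    have hee : (c * ιM) * (c * ιM) = c * ιM := by
      rw [mul_assoc, ← mul_assoc ιM c ιM, hcen c, mul_assoc c ιM ιM, hidem, ← mul_assoc, hcc]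
    have hI : (Ideal.span {1 - c * ιM} : Ideal (A.sub N)) ≠ ⊤ := by
      intro htop
      have h1 : (1 : A.sub N) ∈ (Ideal.span {1 - c * ιM} : Ideal (A.sub N)) := by
        rw [htop]; trivial
      rw [Ideal.span, Submodule.mem_span_singleton] at h1
      obtain ⟨y, hy⟩ := h1
      rw [smul_eq_mul] at hy
      have h2 : c * ιM = y * ((1 - c * ιM) * (c * ιM)) := by rw [← mul_assoc, hy, one_mul]
      rw [sub_mul, one_mul, hee, sub_self, mul_zero] at h2
      exact he0 h2
    obtain ⟨mI, hmax, hIm⟩ := Ideal.exists_le_maximal _ hI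
    haveI hsimp : IsSimpleModule (A.sub N) ((A.sub N) ⧸ mI) :=
      isSimpleModule_iff_isCoatom.mpr (Ideal.isMaximal_def.mp hmax)
    have henm : c * ιM ∉ mI := by
      intro hem
      have h1e : (1 : A.sub N) - c * ιM ∈ mI := hIm (Ideal.subset_span rfl)
      have h1 : (1 : A.sub N) ∈ mI := by
        have := add_mem h1e hem
        rwa [sub_add_cancel] at this
      exact hmax.ne_top ((Ideal.eq_top_iff_one mI).mpr h1)
    have hmk : (c * ιM) • (Submodule.Quotient.mk (1 : A.sub N) : (A.sub N) ⧸ mI) ≠ 0 := by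
      rw [← Submodule.Quotient.mk_smul, smul_eq_mul, mul_one]
      simpa [Submodule.Quotient.mk_eq_zero] using henm
    have hne : ¬ IsEmpty (((A.sub N) ⧸ mI) ≃ₗ[A.sub N] M) := by
      intro hem
      apply hmk
      have hz := hzero _ hsimp hem (Submodule.Quotient.mk (1 : A.sub N))
      rw [mul_smul, hz, smul_zero]
    obtain ⟨f⟩ := not_isEmpty_iff.mp hne
    have hcm0 : c • f (Submodule.Quotient.mk (1 : A.sub N)) ≠ 0 := by
      have h3 : c • f (Submodule.Quotient.mk (1 : A.sub N))
          = f ((c * ιM) • Submodule.Quotient.mk (1 : A.sub N)) := by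
        rw [map_smul, mul_smul, hact]
      rw [h3]
      intro h0
      exact hmk (f.map_eq_zero_iff.mp h0)
    haveI hTw := A.tw_isSimple N g M hM
    have hne' : ¬ IsEmpty ((Tw A N g M) ≃ₗ[A.sub N] M') := by
      intro hem
      apply hcm0
      have hz := hzero' (Tw A N g M) hTw hem
        (show Tw A N g M from f (Submodule.Quotient.mk (1 : A.sub N)))
      rw [A.tw_smul] at hz
      have hca : A.conjHom N g ιM' = c := Subtype.ext rfl
      rwa [hca] at hz
    obtain ⟨f'⟩ := not_isEmpty_iff.mp hne'
    refine ⟨g, f'.symm.toAddEquiv, ?_⟩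
    intro a m' hmem
    have h1 : f'.symm (a • m') = a • f'.symm m' := map_smul f'.symm a m'
    have h2 : (⟨(((A.u g)⁻¹ : A.carrierˣ) : A.carrier) * (a : A.carrier) *
        (A.u g : A.carrier), hmem⟩ : A.sub N) = A.conjHom N g a := Subtype.ext rfl
    simp only [LinearEquiv.coe_toAddEquiv]
    rw [h2]
    exact h1
  · rintro ⟨g, e, he⟩
    haveI := hM
    haveI : Nontrivial M := IsSimpleModule.nontrivial (A.sub N) M
    obtain ⟨m, hm⟩ := exists_ne (0 : M)
    refine ⟨(A.u g : A.carrier), ?_⟩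
    intro h0
    set c : A.sub N := ⟨(((A.u g)⁻¹ : A.carrierˣ) : A.carrier) * (ιM' : A.carrier) *
      (A.u g : A.carrier), A.conj_mem N g ιM'.2⟩ with hcdef
    have hc0 : c * ιM = 0 := by
      apply Subtype.ext
      show (c : A.carrier) * (ιM : A.carrier) = 0
      rw [hcdef]
      show (((A.u g)⁻¹ : A.carrierˣ) : A.carrier) * (ιM' : A.carrier) * (A.u g : A.carrier) *
        (ιM : A.carrier) = 0
      rw [mul_assoc, mul_assoc, ← mul_assoc (ιM' : A.carrier), h0, mul_zero]
    have h1 : e (ιM' • e.symm m) = c • e (e.symm m) := he ιM' (e.symm m) (A.conj_mem N g ιM'.2)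
    rw [hact'] at h1
    have h2 : e (e.symm m) = 0 := by
      calc e (e.symm m) = c • e (e.symm m) := h1
        _ = c • (ιM • e (e.symm m)) := by rw [hact]
        _ = (c * ιM) • e (e.symm m) := (mul_smul _ _ _).symm
        _ = 0 := by rw [hc0, zero_smul]
    apply hm
    rw [← e.apply_symm_apply m]
    exact h2
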